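/- Let f : ℝ → ℝ be convex with left-derivative f'_- and second distributional derivative f'' (a positive Radon measure satisfying f''([a,b)) = f'_-(b) − f'_-(a)). Then for all real a ≤ b: f(b) − f(a) = f'_-(a)(b−a) + ∫_{[a,b)} (b−u) f''(du). -/

import Mathlib

open Filter Set MeasureTheory Topology

section aux

variable {f f' : ℝ → ℝ}

lemma aux_tendsto_slope (hf' : ∀ y : ℝ, HasDerivWithinAt f (f' y) (Set.Iio y) y) (y : ℝ) :
    Tendsto (slope f y) (𝓝[<] y) (𝓝 (f' y)) := by
  have := (hasDerivWithinAt_iff_tendsto_slope' (by simp : y ∉ Iio y)).1 (hf' y)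
  exact this

lemma aux_leftDeriv_le_slope (hf : ConvexOn ℝ Set.univ f)
    (hf' : ∀ y : ℝ, HasDerivWithinAt f (f' y) (Set.Iio y) y)
    {x y : ℝ} (hxy : x < y) : f' x ≤ slope f x y := by
  refine le_of_tendsto (aux_tendsto_slope hf' x) ?_
  filter_upwards [self_mem_nhdsWithin] with u (hu : u < x)
  have := hf.secant_mono (mem_univ x) (mem_univ u) (mem_univ y)
    hu.ne hxy.ne' (hu.le.trans hxy.le)
  simpa [slope_def_field] using this

lemma aux_slope_le_leftDeriv (hf : ConvexOn ℝ Set.univ f)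
    (hf' : ∀ y : ℝ, HasDerivWithinAt f (f' y) (Set.Iio y) y)
    {x y : ℝ} (hxy : x < y) : slope f x y ≤ f' y := by
  refine ge_of_tendsto (aux_tendsto_slope hf' y) ?_
  filter_upwards [Ioo_mem_nhdsLT_of_mem (show y ∈ Ioc x y by simp [hxy])] with u hu
  have := hf.secant_mono (mem_univ y) (mem_univ x) (mem_univ u)
    hxy.ne hu.2.ne (hu.1.le)
  rw [slope_comm]
  simpa [slope_def_field] using this

lemma aux_mono (hf : ConvexOn ℝ Set.univ f)
    (hf' : ∀ y : ℝ, HasDerivWithinAt f (f' y) (Set.Iio y) y) : Monotone f' := by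
  intro x y hxy
  rcases eq_or_lt_of_le hxy with rfl | h
  · exact le_refl _
  · exact (aux_leftDeriv_le_slope hf hf' h).trans (aux_slope_le_leftDeriv hf hf' h)

/-- FTC for the left derivative of a convex function, via reflection. -/
lemma aux_ftc (hf : ConvexOn ℝ Set.univ f)
    (hf' : ∀ y : ℝ, HasDerivWithinAt f (f' y) (Set.Iio y) y)
    {a b : ℝ} (hab : a ≤ b) : ∫ y in a..b, f' y = f b - f a := by
  have hcont : Continuous f := by
    have := ConvexOn.continuousOn isOpen_univ hf
    rwa [← continuousOn_univ]
  have hmono : Monotone f' := aux_mono hf hf'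
  -- reflect
  set g : ℝ → ℝ := fun x => f (-x) with hg
  set g' : ℝ → ℝ := fun x => -f' (-x) with hg'
  have hgd : ∀ x : ℝ, HasDerivWithinAt g (g' x) (Ioi x) x := by
    intro x
    have hneg : HasDerivWithinAt (fun y : ℝ => -y) (-1) (Ioi x) x :=
      (hasDerivAt_neg x).hasDerivWithinAt
    have hmap : MapsTo (fun y : ℝ => -y) (Ioi x) (Iio (-x)) := by
      intro u hu; simpa using neg_lt_neg (show x < u from hu)
    have := (hf' (-x)).comp x hneg hmap
    simpa [hg, hg', Function.comp_def, mul_comm] using this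
  have hint : IntervalIntegrable g' volume (-b) (-a) := by
    have : Monotone g' := fun u v huv => by
      simp only [hg']
      exact neg_le_neg (hmono (neg_le_neg huv))
    exact (this.monotoneOn _).intervalIntegrable
  have hFTC := intervalIntegral.integral_eq_sub_of_hasDeriv_right_of_le
    (by linarith : -b ≤ -a) (hcont.comp continuous_neg).continuousOn
    (fun x _ => hgd x) hint
  have hswap : ∫ y in (-b)..(-a), g' y = -∫ y in a..b, f' y := by
    rw [show (∫ y in (-b)..(-a), g' y) = -∫ y in (-b)..(-a), f' (-y) by
      simp [hg', intervalIntegral.integral_neg]]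
    congr 1
    simpa using (intervalIntegral.integral_comp_neg (a := a) (b := b) f')
  rw [hswap] at hFTC
  simp only [hg, Function.comp_apply, neg_neg] at hFTC
  linarith

end aux

/-- For a convex `f : ℝ → ℝ` with left derivative `f'` and second derivative measure `μ`
(satisfying `μ([a,b)) = f'(b) − f'(a)`), one has for all `a ≤ b`:
`f(b) − f(a) = f'(a)(b−a) + ∫_{[a,b)} (b−u) μ(du)`. -/
theorem convex_taylor_left_deriv
    (f f' : ℝ → ℝ) (μ : Measure ℝ)
    (hf : ConvexOn ℝ Set.univ f)
    (hf' : ∀ y : ℝ, HasDerivWithinAt f (f' y) (Set.Iio y) y)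
    (hμ : ∀ a b : ℝ, a ≤ b → μ (Set.Ico a b) = ENNReal.ofReal (f' b - f' a)) :
    ∀ a b : ℝ, a ≤ b →
      f b - f a = f' a * (b - a) + ∫ u in Set.Ico a b, (b - u) ∂μ := by
  intro a b hab
  have hmono : Monotone f' := aux_mono hf hf'
  set ν : Measure ℝ := μ.restrict (Ico a b) with hν
  haveI : IsFiniteMeasure ν := by
    constructor
    rw [hν, Measure.restrict_apply_univ, hμ a b hab]
    exact ENNReal.ofReal_lt_top
  set S : Set (ℝ × ℝ) := {p | p.1 < p.2 ∧ p.2 ≤ b} with hS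
  have hSm : MeasurableSet S := by
    apply MeasurableSet.inter
    · exact measurableSet_lt measurable_fst measurable_snd
    · exact measurable_snd measurableSet_Iic
  -- first computation of the product measure
  have E1 : (ν.prod volume) S = ∫⁻ u, ENNReal.ofReal (b - u) ∂ν := by
    rw [Measure.prod_apply hSm]
    apply lintegral_congr
    intro u
    have : Prod.mk u ⁻¹' S = Ioc u b := by
      ext t; simp [hS, Ioc, and_comm]
    rw [this, Real.volume_Ioc]
  -- second computation of the product measure
  have E2 : (ν.prod volume) S
      = ∫⁻ t in Ioc a b, ENNReal.ofReal (f' t - f' a) ∂volume := by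
    rw [Measure.prod_apply_symm hSm]
    have : ∀ t : ℝ, ν ((fun u => (u, t)) ⁻¹' S)
        = (Ioc a b).indicator (fun t => ENNReal.ofReal (f' t - f' a)) t := by
      intro t
      rcases le_or_gt t b with htb | htb
      · have hpre : (fun u => (u, t)) ⁻¹' S = Iio t := by
          ext u; simp [hS, htb]
        rw [hpre, hν, Measure.restrict_apply measurableSet_Iio]
        rcases le_or_gt t a with hta | hta
        · have : Iio t ∩ Ico a b = ∅ := by
            ext u; simp only [mem_inter_iff, mem_Iio, mem_Ico, mem_empty_iff_false, iff_false]
            rintro ⟨h1, h2, _⟩; linarith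
          rw [this, measure_empty, indicator_of_notMem (by simp [hta]) _]
        · have : Iio t ∩ Ico a b = Ico a t := by
            ext u
            simp only [mem_inter_iff, mem_Iio, mem_Ico]
            constructor
            · rintro ⟨h1, h2, h3⟩; exact ⟨h2, h1⟩
            · rintro ⟨h1, h2⟩; exact ⟨h2, h1, lt_of_lt_of_le h2 htb⟩
          rw [this, hμ a t hta.le, indicator_of_mem (by simp [hta, htb]) _]
      · have hpre : (fun u => (u, t)) ⁻¹' S = ∅ := by
          ext u; simp [hS]; intro _; linarith
        rw [hpre, measure_empty, indicator_of_notMem (by simp; intro _; linarith) _]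
    calc ∫⁻ t, ν ((fun u => (u, t)) ⁻¹' S) ∂volume
        = ∫⁻ t, (Ioc a b).indicator (fun t => ENNReal.ofReal (f' t - f' a)) t ∂volume :=
          lintegral_congr this
      _ = _ := lintegral_indicator measurableSet_Ioc _
  -- integrability facts
  have hf'meas : Measurable f' := hmono.measurable
  have hf'int : IntervalIntegrable f' volume a b := (hmono.monotoneOn _).intervalIntegrable
  have hsubint : IntegrableOn (fun t => f' t - f' a) (Ioc a b) volume := by
    have := (intervalIntegrable_iff_integrableOn_Ioc_of_le hab).1 hf'int
    exact this.sub (integrableOn_const measure_Ioc_lt_top.ne)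
  have hbu_int : Integrable (fun u => b - u) ν := by
    refine ⟨(continuous_const.sub continuous_id).aestronglyMeasurable, ?_⟩
    apply HasFiniteIntegral.of_bounded (C := b - a)
    rw [hν]
    filter_upwards [ae_restrict_mem measurableSet_Ico] with u hu
    rw [Real.norm_eq_abs, abs_of_nonneg (by linarith [hu.2])]
    linarith [hu.1]
  -- convert both sides to real integrals
  have hL : ENNReal.ofReal (∫ u, (b - u) ∂ν) = ∫⁻ u, ENNReal.ofReal (b - u) ∂ν := by
    apply ofReal_integral_eq_lintegral_ofReal hbu_int
    rw [hν]
    filter_upwards [ae_restrict_mem measurableSet_Ico] with u hu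
    simp only [Pi.zero_apply]
    linarith [hu.2]
  have hR : ENNReal.ofReal (∫ t in Ioc a b, (f' t - f' a))
      = ∫⁻ t in Ioc a b, ENNReal.ofReal (f' t - f' a) ∂volume := by
    apply ofReal_integral_eq_lintegral_ofReal hsubint
    filter_upwards [ae_restrict_mem measurableSet_Ioc] with t ht
    have := hmono ht.1.le
    simp only [Pi.zero_apply]
    linarith
  have hEq : ENNReal.ofReal (∫ u, (b - u) ∂ν)
      = ENNReal.ofReal (∫ t in Ioc a b, (f' t - f' a)) := by
    rw [hL, hR, ← E1, ← E2]
  have hLnn : 0 ≤ ∫ u, (b - u) ∂ν := by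
    apply integral_nonneg_of_ae
    rw [hν]
    filter_upwards [ae_restrict_mem measurableSet_Ico] with u hu
    simp only [Pi.zero_apply]
    linarith [hu.2]
  have hRnn : 0 ≤ ∫ t in Ioc a b, (f' t - f' a) := by
    apply integral_nonneg_of_ae
    filter_upwards [ae_restrict_mem measurableSet_Ioc] with t ht
    have := hmono ht.1.le
    simp only [Pi.zero_apply]
    linarith
  have key : ∫ u, (b - u) ∂ν = ∫ t in Ioc a b, (f' t - f' a) :=
    (ENNReal.ofReal_eq_ofReal_iff hLnn hRnn).1 hEq
  -- evaluate the right-hand side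
  have hrhs : ∫ t in Ioc a b, (f' t - f' a) = f b - f a - f' a * (b - a) := by
    rw [← intervalIntegral.integral_of_le hab,
      intervalIntegral.integral_sub hf'int intervalIntegrable_const,
      aux_ftc hf hf' hab]
    simp [mul_comm]
  rw [show (∫ u in Set.Ico a b, (b - u) ∂μ) = ∫ u, (b - u) ∂ν from rfl, key, hrhs]
  ring
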